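/- For a one-dimensional random variable x with p(x ∈ (a,b)) = 1 and a twice differentiable function φ on (a,b), the Jensen gap satisfies (inf_x φ''(x)) · Var(x) / 2 ≤ E[φ(x)] − φ(E[x]) ≤ (sup_x φ''(x)) · Var(x) / 2. -/

import Mathlib

open MeasureTheory ProbabilityTheory

private lemma mean_lt_aux {Ω : Type*} [MeasureSpace Ω] [IsProbabilityMeasure (ℙ : Measure Ω)]
    {X : Ω → ℝ} {c : ℝ} (hXint : Integrable X) (h : ∀ᵐ ω, X ω < c) :
    (∫ ω, X ω) < c := by
  have hle : (∫ ω, X ω) ≤ ∫ _ω : Ω, c :=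
    integral_mono_ae hXint (integrable_const c) (h.mono fun ω hω => hω.le)
  rw [integral_const] at hle
  simp only [probReal_univ, one_smul] at hle
  rcases lt_or_eq_of_le hle with h' | h'
  · exact h'
  · exfalso
    have hz : (∫ ω, (c - X ω)) = 0 := by
      rw [integral_sub (integrable_const c) hXint, integral_const]
      simp [h']
    have hnn : 0 ≤ᵐ[(ℙ : Measure Ω)] fun ω => c - X ω :=
      h.mono fun ω hω => sub_nonneg.2 hω.le
    have heq := (integral_eq_zero_iff_of_nonneg_ae hnn ((integrable_const c).sub hXint)).1 hz
    obtain ⟨ω, h1, h2⟩ := (h.and heq).exists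
    simp only [Pi.zero_apply] at h2
    linarith

private lemma lt_mean_aux {Ω : Type*} [MeasureSpace Ω] [IsProbabilityMeasure (ℙ : Measure Ω)]
    {X : Ω → ℝ} {c : ℝ} (hXint : Integrable X) (h : ∀ᵐ ω, c < X ω) :
    c < ∫ ω, X ω := by
  have := mean_lt_aux (X := fun ω => -X ω) hXint.neg (h.mono fun ω hω => neg_lt_neg hω)
  rw [integral_neg] at this
  linarith

private lemma tangent_aux {S : Set ℝ} (hSo : IsOpen S) (hSc : Convex ℝ S) {f : ℝ → ℝ}
    (hf1 : ∀ x ∈ S, DifferentiableAt ℝ f x) (hf2 : ∀ x ∈ S, DifferentiableAt ℝ (deriv f) x)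
    (h2 : ∀ x ∈ S, 0 ≤ deriv (deriv f) x) {μ x : ℝ} (hμ : μ ∈ S) (hx : x ∈ S) :
    f μ + deriv f μ * (x - μ) ≤ f x := by
  have hconv : ConvexOn ℝ S f := by
    apply convexOn_of_deriv2_nonneg' hSc
    · exact fun y hy => (hf1 y hy).differentiableWithinAt
    · exact fun y hy => (hf2 y hy).differentiableWithinAt
    · intro y hy
      simpa [Function.iterate_succ, Function.comp] using h2 y hy
  rcases lt_trichotomy μ x with h | h | h
  · have hs := hconv.deriv_le_slope hμ hx h (hf1 μ hμ)
    rw [slope_def_field] at hs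
    have hx0 : (0:ℝ) < x - μ := sub_pos.2 h
    have := (le_div_iff₀ hx0).1 hs
    linarith
  · simp [h]
  · have hs := hconv.slope_le_deriv hx hμ h (hf1 μ hμ)
    rw [slope_def_field] at hs
    have hx0 : (0:ℝ) < μ - x := sub_pos.2 h
    have h' := (div_le_iff₀ hx0).1 hs
    nlinarith [h']

private lemma quad_lower {S : Set ℝ} (hSo : IsOpen S) (hSc : Convex ℝ S) {φ : ℝ → ℝ}
    (hφ : ∀ x ∈ S, DifferentiableAt ℝ φ x ∧ DifferentiableAt ℝ (deriv φ) x)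
    {m : ℝ} (hm : ∀ y ∈ S, m ≤ deriv (deriv φ) y)
    {μ x : ℝ} (hμ : μ ∈ S) (hx : x ∈ S) :
    m / 2 * (x - μ) ^ 2 ≤ φ x - φ μ - deriv φ μ * (x - μ) := by
  set f : ℝ → ℝ := fun y => φ y - m / 2 * y ^ 2 with hf
  have hder : ∀ y ∈ S, HasDerivAt f (deriv φ y - m * y) y := by
    intro y hy
    have h1 := (hφ y hy).1.hasDerivAt
    have h2 : HasDerivAt (fun z : ℝ => m / 2 * z ^ 2) (m * y) y := by
      have := (hasDerivAt_pow 2 y).const_mul (m / 2)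
      refine this.congr_deriv ?_
      rw [show (2:ℕ) - 1 = 1 from rfl]; push_cast; ring
    exact h1.sub h2
  have hf1 : ∀ y ∈ S, DifferentiableAt ℝ f y := fun y hy => (hder y hy).differentiableAt
  have hev : ∀ y ∈ S, deriv f =ᶠ[nhds y] fun z => deriv φ z - m * z := by
    intro y hy
    filter_upwards [hSo.mem_nhds hy] with z hz using (hder z hz).deriv
  have hdiff2 : ∀ y ∈ S, DifferentiableAt ℝ (fun z => deriv φ z - m * z) y := by
    intro y hy
    exact (hφ y hy).2.sub (differentiableAt_id.const_mul m)
  have hf2 : ∀ y ∈ S, DifferentiableAt ℝ (deriv f) y := by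
    intro y hy
    exact (hdiff2 y hy).congr_of_eventuallyEq (hev y hy)
  have h2 : ∀ y ∈ S, 0 ≤ deriv (deriv f) y := by
    intro y hy
    have he : deriv (deriv f) y = deriv (fun z => deriv φ z - m * z) y :=
      Filter.EventuallyEq.deriv_eq (hev y hy)
    have hc : HasDerivAt (fun z => deriv φ z - m * z) (deriv (deriv φ) y - m * 1) y :=
      (hφ y hy).2.hasDerivAt.sub ((hasDerivAt_id y).const_mul m)
    rw [he, hc.deriv]
    have := hm y hy
    linarith
  have key := tangent_aux hSo hSc hf1 hf2 h2 hμ hx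
  have hdμ : deriv f μ = deriv φ μ - m * μ := (hder μ hμ).deriv
  rw [hdμ] at key
  simp only [hf] at key
  nlinarith [key]

private lemma quad_upper {S : Set ℝ} (hSo : IsOpen S) (hSc : Convex ℝ S) {φ : ℝ → ℝ}
    (hφ : ∀ x ∈ S, DifferentiableAt ℝ φ x ∧ DifferentiableAt ℝ (deriv φ) x)
    {M : ℝ} (hM : ∀ y ∈ S, deriv (deriv φ) y ≤ M)
    {μ x : ℝ} (hμ : μ ∈ S) (hx : x ∈ S) :
    φ x - φ μ - deriv φ μ * (x - μ) ≤ M / 2 * (x - μ) ^ 2 := by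
  have hnegderiv : (deriv fun y => -φ y) = fun y => -deriv φ y := deriv.neg'
  have hψ : ∀ y ∈ S, DifferentiableAt ℝ (fun y => -φ y) y ∧
      DifferentiableAt ℝ (deriv fun y => -φ y) y := by
    intro y hy
    refine ⟨(hφ y hy).1.neg, ?_⟩
    rw [hnegderiv]
    exact (hφ y hy).2.neg
  have hm : ∀ y ∈ S, -M ≤ deriv (deriv fun y => -φ y) y := by
    intro y hy
    rw [hnegderiv]
    have : deriv (fun y => -deriv φ y) y = -deriv (deriv φ) y := deriv.neg
    rw [this]
    have := hM y hy
    linarith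
  have key := quad_lower hSo hSc hψ hm hμ hx
  rw [hnegderiv] at key
  simp only at key
  nlinarith [key]

/-- The Jensen gap bounds: for a real random variable `X` supported a.s. in an interval
`(a, b)` (where `a, b` may be infinite, encoded as `EReal`s), and a function `φ` twice
differentiable on `(a, b)` with bounded second derivative there,
`(inf φ'') · Var(X) / 2 ≤ E[φ(X)] − φ(E[X]) ≤ (sup φ'') · Var(X) / 2`. -/
theorem jensen_gap_bounds
    {Ω : Type*} [MeasureSpace Ω] [IsProbabilityMeasure (ℙ : Measure Ω)]
    (X : Ω → ℝ) (a b : EReal) (hab : a < b)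
    (S : Set ℝ) (hS : S = {x : ℝ | a < (x : EReal) ∧ (x : EReal) < b})
    (hsupp : ∀ᵐ ω, X ω ∈ S)
    (φ : ℝ → ℝ)
    (hφ : ∀ x ∈ S, DifferentiableAt ℝ φ x ∧ DifferentiableAt ℝ (deriv φ) x)
    (hXint : Integrable X) (hX2 : MemLp X 2)
    (hφXint : Integrable (fun ω => φ (X ω)))
    (hbdd_below : BddBelow (iteratedDeriv 2 φ '' S))
    (hbdd_above : BddAbove (iteratedDeriv 2 φ '' S)) :
    sInf (iteratedDeriv 2 φ '' S) * variance X ℙ / 2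
        ≤ (∫ ω, φ (X ω)) - φ (∫ ω, X ω) ∧
      (∫ ω, φ (X ω)) - φ (∫ ω, X ω)
        ≤ sSup (iteratedDeriv 2 φ '' S) * variance X ℙ / 2 := by
  -- basic structure of S
  have hid2 : iteratedDeriv 2 φ = deriv (deriv φ) := by
    rw [iteratedDeriv_succ, iteratedDeriv_one]
  have hSpre : S = (fun x : ℝ => (x : EReal)) ⁻¹' Set.Ioo a b := by
    rw [hS]; rfl
  have hSo : IsOpen S := by
    rw [hSpre]
    exact isOpen_Ioo.preimage continuous_coe_real_ereal
  have hSc : Convex ℝ S := by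
    rw [convex_iff_ordConnected]
    constructor
    intro x hx y hy z hz
    rw [hS] at hx hy ⊢
    constructor
    · exact lt_of_lt_of_le hx.1 (EReal.coe_le_coe_iff.2 hz.1)
    · exact lt_of_le_of_lt (EReal.coe_le_coe_iff.2 hz.2) hy.2
  set μ := ∫ ω, X ω with hμdef
  obtain ⟨ω0, hω0⟩ := hsupp.exists
  -- the mean lies in S
  have hμS : μ ∈ S := by
    rw [hS]
    rw [hS] at hω0
    constructor
    · -- a < μ
      rcases eq_or_ne a ⊥ with rfl | haB
      · exact EReal.bot_lt_coe μ
      · have haT : a ≠ ⊤ := (hω0.1.trans (EReal.coe_lt_top _)).ne_top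
        have ha' : ((a.toReal : ℝ) : EReal) = a := EReal.coe_toReal haT haB
        have hax : ∀ᵐ ω, a.toReal < X ω := by
          filter_upwards [hsupp] with ω hω
          rw [hS] at hω
          have := hω.1
          rw [← ha'] at this
          exact_mod_cast this
        have := lt_mean_aux hXint hax
        rw [← ha']
        exact_mod_cast this
    · -- μ < b
      rcases eq_or_ne b ⊤ with rfl | hbT
      · exact EReal.coe_lt_top μ
      · have hbB : b ≠ ⊥ := (lt_of_le_of_lt bot_le hω0.2).ne'
        have hb' : ((b.toReal : ℝ) : EReal) = b := EReal.coe_toReal hbT hbB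
        have hbx : ∀ᵐ ω, X ω < b.toReal := by
          filter_upwards [hsupp] with ω hω
          rw [hS] at hω
          have := hω.2
          rw [← hb'] at this
          exact_mod_cast this
        have := mean_lt_aux hXint hbx
        rw [← hb']
        exact_mod_cast this
  have hmle : ∀ y ∈ S, sInf (iteratedDeriv 2 φ '' S) ≤ deriv (deriv φ) y := by
    intro y hy
    calc sInf (iteratedDeriv 2 φ '' S) ≤ iteratedDeriv 2 φ y := csInf_le hbdd_below ⟨y, hy, rfl⟩
      _ = deriv (deriv φ) y := by rw [hid2]
  have hMle : ∀ y ∈ S, deriv (deriv φ) y ≤ sSup (iteratedDeriv 2 φ '' S) := by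
    intro y hy
    calc deriv (deriv φ) y = iteratedDeriv 2 φ y := by rw [hid2]
      _ ≤ sSup (iteratedDeriv 2 φ '' S) := le_csSup hbdd_above ⟨y, hy, rfl⟩
  -- integrability
  have hsqint : Integrable (fun ω => (X ω - μ) ^ 2) := by
    have h2 : MemLp (fun ω => X ω - μ) 2 := hX2.sub (memLp_const μ)
    exact h2.integrable_sq
  have hrhsint : Integrable (fun ω => φ (X ω) - φ μ - deriv φ μ * (X ω - μ)) := by
    apply Integrable.sub (hφXint.sub (integrable_const (φ μ)))
    exact ((hXint.sub (integrable_const μ)).const_mul (deriv φ μ))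
  have hXsubint : Integrable (fun ω => X ω - μ) := hXint.sub (integrable_const μ)
  -- value of the variance
  have hvar : variance X ℙ = ∫ ω, (X ω - μ) ^ 2 := by
    rw [variance_eq_integral hX2.aestronglyMeasurable.aemeasurable]
  -- the integral of the affine remainder
  have hrhs : (∫ ω, (φ (X ω) - φ μ - deriv φ μ * (X ω - μ))) = (∫ ω, φ (X ω)) - φ μ := by
    have h1 : (∫ ω, (φ (X ω) - φ μ - deriv φ μ * (X ω - μ)))
        = (∫ ω, (φ (X ω) - φ μ)) - ∫ ω, deriv φ μ * (X ω - μ) :=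
      integral_sub (hφXint.sub (integrable_const (φ μ))) (hXsubint.const_mul (deriv φ μ))
    have h2 : (∫ ω, (φ (X ω) - φ μ)) = (∫ ω, φ (X ω)) - φ μ := by
      rw [integral_sub hφXint (integrable_const (φ μ)), integral_const]
      simp
    have h3 : (∫ ω, deriv φ μ * (X ω - μ)) = deriv φ μ * ((∫ ω, X ω) - μ) := by
      rw [integral_const_mul, integral_sub hXint (integrable_const μ), integral_const]
      simp
    rw [h1, h2, h3, ← hμdef]
    ring
  constructor
  · -- lower bound
    have hpt : ∀ᵐ ω, sInf (iteratedDeriv 2 φ '' S) / 2 * (X ω - μ) ^ 2 ≤ φ (X ω) - φ μ - deriv φ μ * (X ω - μ) := by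
      filter_upwards [hsupp] with ω hω
      exact quad_lower hSo hSc hφ hmle hμS hω
    have hle := integral_mono_ae (hsqint.const_mul (sInf (iteratedDeriv 2 φ '' S) / 2)) hrhsint hpt
    rw [integral_const_mul, hrhs] at hle
    rw [hvar]
    have hring : sInf (iteratedDeriv 2 φ '' S) * (∫ ω, (X ω - μ) ^ 2) / 2
        = sInf (iteratedDeriv 2 φ '' S) / 2 * (∫ ω, (X ω - μ) ^ 2) := by ring
    rw [hring]
    linarith
  · -- upper bound
    have hpt : ∀ᵐ ω, φ (X ω) - φ μ - deriv φ μ * (X ω - μ) ≤ sSup (iteratedDeriv 2 φ '' S) / 2 * (X ω - μ) ^ 2 := by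
      filter_upwards [hsupp] with ω hω
      exact quad_upper hSo hSc hφ hMle hμS hω
    have hle := integral_mono_ae hrhsint (hsqint.const_mul (sSup (iteratedDeriv 2 φ '' S) / 2)) hpt
    rw [integral_const_mul, hrhs] at hle
    rw [hvar]
    have hring : sSup (iteratedDeriv 2 φ '' S) * (∫ ω, (X ω - μ) ^ 2) / 2
        = sSup (iteratedDeriv 2 φ '' S) / 2 * (∫ ω, (X ω - μ) ^ 2) := by ring
    rw [hring]
    linarith
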